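/- Singular angle (SRG phase) nonsingularity: define for A ∈ ℂ^{n×n} the maximal singular angle φ_max(A) := sup{ arccos(Re⟨x,Ax⟩/(‖x‖‖Ax‖)) : x ≠ 0, Ax ≠ 0 } ∈ [0, π]. If A and B are invertible and φ_max(A) + φ_max(B) < π, then I + AB is nonsingular, and moreover every eigenvalue λ of AB satisfies |arg λ| ≤ φ_max(A) + φ_max(B) < π. -/

import Mathlib

open Matrix

noncomputable def phiMax {n : ℕ} (A : Matrix (Fin n) (Fin n) ℂ) : ℝ :=
  sSup {t : ℝ | ∃ x : EuclideanSpace ℂ (Fin n), x ≠ 0 ∧ Matrix.toEuclideanLin A x ≠ 0 ∧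
    t = Real.arccos ((inner ℂ x (Matrix.toEuclideanLin A x) : ℂ).re /
      (‖x‖ * ‖Matrix.toEuclideanLin A x‖))}

open InnerProductGeometry RealInnerProductSpace

section AngleTriangle

variable {V : Type*} [NormedAddCommGroup V] [InnerProductSpace ℝ V]

lemma key_ineq (x y z : V) (hx : ‖x‖ = 1) (hy : ‖y‖ = 1) (hz : ‖z‖ = 1) :
    (inner ℝ x y : ℝ) * (inner ℝ y z : ℝ)
      - Real.sqrt (1 - (inner ℝ x y : ℝ) ^ 2) * Real.sqrt (1 - (inner ℝ y z : ℝ) ^ 2)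
      ≤ (inner ℝ x z : ℝ) := by
  have hyy : (inner ℝ y y : ℝ) = 1 := by
    rw [real_inner_self_eq_norm_mul_norm, hy]; norm_num
  have hxx : (inner ℝ x x : ℝ) = 1 := by
    rw [real_inner_self_eq_norm_mul_norm, hx]; norm_num
  have hzz : (inner ℝ z z : ℝ) = 1 := by
    rw [real_inner_self_eq_norm_mul_norm, hz]; norm_num
  have hinner : (inner ℝ (x - (inner ℝ x y : ℝ) • y) (z - (inner ℝ y z : ℝ) • y) : ℝ)
      = (inner ℝ x z : ℝ) - (inner ℝ x y : ℝ) * (inner ℝ y z : ℝ) := by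
    simp only [inner_sub_left, inner_sub_right, real_inner_smul_left, real_inner_smul_right,
      hyy, real_inner_comm y x, real_inner_comm z y]
    ring
  have hnx : ‖x - (inner ℝ x y : ℝ) • y‖ = Real.sqrt (1 - (inner ℝ x y : ℝ) ^ 2) := by
    rw [← Real.sqrt_sq (norm_nonneg (x - (inner ℝ x y : ℝ) • y)), sq,
      ← real_inner_self_eq_norm_mul_norm]
    congr 1
    simp only [inner_sub_left, inner_sub_right, real_inner_smul_left, real_inner_smul_right,
      hyy, hxx, real_inner_comm y x]
    ring
  have hnz : ‖z - (inner ℝ y z : ℝ) • y‖ = Real.sqrt (1 - (inner ℝ y z : ℝ) ^ 2) := by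
    rw [← Real.sqrt_sq (norm_nonneg (z - (inner ℝ y z : ℝ) • y)), sq,
      ← real_inner_self_eq_norm_mul_norm]
    congr 1
    simp only [inner_sub_left, inner_sub_right, real_inner_smul_left, real_inner_smul_right,
      hyy, hzz, real_inner_comm z y]
    ring
  have habs := abs_real_inner_le_norm (x - (inner ℝ x y : ℝ) • y) (z - (inner ℝ y z : ℝ) • y)
  rw [hinner, hnx, hnz] at habs
  linarith [(abs_le.mp habs).1]

lemma angle_triangle_unit {x y z : V} (hx : ‖x‖ = 1) (hy : ‖y‖ = 1) (hz : ‖z‖ = 1) :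
    angle x z ≤ angle x y + angle y z := by
  by_cases hab : Real.pi ≤ angle x y + angle y z
  · exact le_trans (angle_le_pi x z) hab
  push_neg at hab
  have h0 : 0 ≤ angle x y + angle y z := add_nonneg (angle_nonneg _ _) (angle_nonneg _ _)
  have hca : Real.cos (angle x y) = (inner ℝ x y : ℝ) := by rw [cos_angle, hx, hy]; norm_num
  have hcb : Real.cos (angle y z) = (inner ℝ y z : ℝ) := by rw [cos_angle, hy, hz]; norm_num
  have hsa : Real.sin (angle x y) = Real.sqrt (1 - (inner ℝ x y : ℝ) ^ 2) := by
    rw [angle, Real.sin_arccos, hx, hy]; norm_num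
  have hsb : Real.sin (angle y z) = Real.sqrt (1 - (inner ℝ y z : ℝ) ^ 2) := by
    rw [angle, Real.sin_arccos, hy, hz]; norm_num
  have hcos : Real.cos (angle x y + angle y z) ≤ Real.cos (angle x z) := by
    rw [Real.cos_add, hca, hcb, hsa, hsb, cos_angle, hx, hz]
    simpa using key_ineq x y z hx hy hz
  exact (Real.strictAntiOn_cos.le_iff_ge ⟨h0, hab.le⟩
    ⟨angle_nonneg x z, angle_le_pi x z⟩).mp hcos

lemma angle_triangle' {x y z : V} (hx : x ≠ 0) (hy : y ≠ 0) (hz : z ≠ 0) :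
    angle x z ≤ angle x y + angle y z := by
  have hx0 : (0 : ℝ) < ‖x‖ := norm_pos_iff.mpr hx
  have hy0 : (0 : ℝ) < ‖y‖ := norm_pos_iff.mpr hy
  have hz0 : (0 : ℝ) < ‖z‖ := norm_pos_iff.mpr hz
  have hx' : (0 : ℝ) < ‖x‖⁻¹ := inv_pos.mpr hx0
  have hy' : (0 : ℝ) < ‖y‖⁻¹ := inv_pos.mpr hy0
  have hz' : (0 : ℝ) < ‖z‖⁻¹ := inv_pos.mpr hz0
  have nx : ‖(‖x‖⁻¹ • x)‖ = 1 := by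
    rw [norm_smul, Real.norm_eq_abs, abs_of_pos hx', inv_mul_cancel₀ hx0.ne']
  have ny : ‖(‖y‖⁻¹ • y)‖ = 1 := by
    rw [norm_smul, Real.norm_eq_abs, abs_of_pos hy', inv_mul_cancel₀ hy0.ne']
  have nz : ‖(‖z‖⁻¹ • z)‖ = 1 := by
    rw [norm_smul, Real.norm_eq_abs, abs_of_pos hz', inv_mul_cancel₀ hz0.ne']
  calc angle x z = angle (‖x‖⁻¹ • x) (‖z‖⁻¹ • z) := by
        rw [angle_smul_left_of_pos _ _ hx', angle_smul_right_of_pos _ _ hz']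
    _ ≤ angle (‖x‖⁻¹ • x) (‖y‖⁻¹ • y) + angle (‖y‖⁻¹ • y) (‖z‖⁻¹ • z) :=
        angle_triangle_unit nx ny nz
    _ = angle x y + angle y z := by
        rw [angle_smul_left_of_pos _ _ hx', angle_smul_right_of_pos _ _ hy',
          angle_smul_left_of_pos _ _ hy', angle_smul_right_of_pos _ _ hz']

end AngleTriangle

lemma angle_euclidean {n : ℕ} (x y : EuclideanSpace ℂ (Fin n)) :
    angle x y = Real.arccos ((inner ℂ x y : ℂ).re / (‖x‖ * ‖y‖)) := by
  rw [angle]; congr 2; simp [PiLp.inner_apply, Complex.inner]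

lemma arccos_le_phiMax {n : ℕ} (M : Matrix (Fin n) (Fin n) ℂ) {x : EuclideanSpace ℂ (Fin n)}
    (hx : x ≠ 0) (hMx : Matrix.toEuclideanLin M x ≠ 0) :
    angle x (Matrix.toEuclideanLin M x) ≤ phiMax M := by
  apply le_csSup
  · exact ⟨Real.pi, by rintro t ⟨w, -, -, rfl⟩; exact Real.arccos_le_pi _⟩
  · exact ⟨x, hx, hMx, angle_euclidean x _⟩

lemma toEuclideanLin_mul_apply {n : ℕ} (M N : Matrix (Fin n) (Fin n) ℂ)
    (x : EuclideanSpace ℂ (Fin n)) :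
    Matrix.toEuclideanLin (M * N) x = Matrix.toEuclideanLin M (Matrix.toEuclideanLin N x) := by
  simp [Matrix.toEuclideanLin_apply, Matrix.mulVec_mulVec]

/-- Singular angle (SRG phase) condition: if A, B are invertible and
φ_max(A) + φ_max(B) < π, then I + AB is nonsingular and every eigenvalue λ of AB
satisfies |arg λ| ≤ φ_max(A) + φ_max(B). -/
theorem stmt19 {n : ℕ} (A B : Matrix (Fin n) (Fin n) ℂ)
    (hA : IsUnit A) (hB : IsUnit B)
    (h : phiMax A + phiMax B < Real.pi) :
    IsUnit (1 + A * B) ∧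
    ∀ lam ∈ spectrum ℂ (A * B), |Complex.arg lam| ≤ phiMax A + phiMax B := by
  have hAB : IsUnit (A * B) := hA.mul hB
  have main : ∀ lam ∈ spectrum ℂ (A * B), |Complex.arg lam| ≤ phiMax A + phiMax B := by
    intro lam hlam
    have hlam0 : lam ≠ 0 := by
      rintro rfl
      exact (spectrum.zero_mem_iff ℂ).mp hlam hAB
    -- get an eigenvector
    rw [← AlgEquiv.spectrum_eq (Matrix.toLinAlgEquiv' (R := ℂ) (n := Fin n)),
      ← Module.End.hasEigenvalue_iff_mem_spectrum] at hlam
    obtain ⟨v, hv⟩ := hlam.exists_hasEigenvector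
    have hveq : (A * B) *ᵥ v = lam • v := by
      have := hv.apply_eq_smul
      rwa [Matrix.toLinAlgEquiv'_apply] at this
    -- move to EuclideanSpace
    set y : EuclideanSpace ℂ (Fin n) := (WithLp.equiv 2 (Fin n → ℂ)).symm v with hy_def
    have hy : y ≠ 0 := by
      intro h0
      exact hv.right (by simpa [hy_def] using congrArg (WithLp.equiv 2 (Fin n → ℂ)) h0)
    have heig : Matrix.toEuclideanLin (A * B) y = lam • y := by
      rw [hy_def, WithLp.equiv_symm_apply, Matrix.toEuclideanLin_apply_piLp_toLp, hveq]
      rfl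
    set z : EuclideanSpace ℂ (Fin n) := Matrix.toEuclideanLin B y with hz_def
    have hz : z ≠ 0 := by
      intro h0
      obtain ⟨u, hu⟩ := hB
      have h1 : Matrix.toEuclideanLin ((↑u⁻¹ : Matrix (Fin n) (Fin n) ℂ) * B) y = 0 := by
        rw [toEuclideanLin_mul_apply, ← hz_def, h0, map_zero]
      rw [← hu, Units.inv_mul, show Matrix.toEuclideanLin (1 : Matrix (Fin n) (Fin n) ℂ) y = y by
        simp [Matrix.toEuclideanLin_apply, Matrix.one_mulVec]] at h1
      exact hy h1
    have hAz : Matrix.toEuclideanLin A z = lam • y := by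
      rw [hz_def, ← toEuclideanLin_mul_apply, heig]
    have hlamy : lam • y ≠ 0 := smul_ne_zero hlam0 hy
    -- the three angles
    have a1 : angle y z ≤ phiMax B := arccos_le_phiMax B hy (hz_def ▸ hz)
    have a2 : angle z (lam • y) ≤ phiMax A := by
      rw [← hAz]
      exact arccos_le_phiMax A hz (hAz ▸ hlamy)
    have a3 : angle y (lam • y) = |Complex.arg lam| := by
      have hny : ‖y‖ ≠ 0 := norm_ne_zero_iff.mpr hy
      have hinner : (inner ℂ y (lam • y) : ℂ).re = lam.re * (‖y‖ * ‖y‖) := by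
        rw [inner_smul_right, inner_self_eq_norm_sq_to_K]
        simp [Complex.mul_re, sq]
      rw [angle_euclidean, hinner, norm_smul]
      have hratio : lam.re * (‖y‖ * ‖y‖) / (‖y‖ * (‖lam‖ * ‖y‖))
          = lam.re / ‖lam‖ := by
        have habs : ‖lam‖ ≠ 0 := by simpa using hlam0
        field_simp
      rw [hratio, ← Complex.cos_arg hlam0, ← Real.cos_abs,
        Real.arccos_cos (abs_nonneg _) (Complex.abs_arg_le_pi lam)]
    have tri : angle y (lam • y) ≤ angle y z + angle z (lam • y) :=
      angle_triangle' hy hz hlamy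
    rw [a3] at tri
    linarith
  refine ⟨?_, main⟩
  by_contra hcon
  have hmem : (-1 : ℂ) ∈ spectrum ℂ (A * B) := by
    rw [spectrum.mem_iff]
    have h1 : algebraMap ℂ (Matrix (Fin n) (Fin n) ℂ) (-1) - A * B = -(1 + A * B) := by
      rw [_root_.map_neg, _root_.map_one]
      abel
    rw [h1, IsUnit.neg_iff]
    exact hcon
  have hp := main (-1) hmem
  rw [Complex.arg_neg_one, abs_of_pos Real.pi_pos] at hp
  linarith
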